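/- Let n ≥ 1 and consider n×n matrices with entries in {0,1} all of whose diagonal entries equal 1. Every such matrix with permanent 1 has at most (n²−n)/2 off-diagonal entries equal to 1; moreover this bound is attained, e.g., by the matrix with 1's on and above the diagonal and 0's below the diagonal, which has permanent 1 and exactly (n²−n)/2 off-diagonal entries equal to 1. -/

import Mathlib

lemma my_perm_eq_one {n : ℕ} (σ : Equiv.Perm (Fin n)) (h : ∀ i, σ i ≤ i) : σ = 1 := by
  have hsum : ∑ i : Fin n, ((σ i : ℕ)) = ∑ i : Fin n, (i : ℕ) :=
    Equiv.sum_comp σ (fun i => (i : ℕ))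
  have := (Finset.sum_eq_sum_iff_of_le (fun i _ => Fin.le_iff_val_le_val.mp (h i))).mp hsum
  ext i
  simpa using this i (Finset.mem_univ i)

lemma my_tri_perm {n : ℕ} :
    (Matrix.of fun i j : Fin n => if i ≤ j then (1 : ℝ) else 0).permanent = 1 := by
  rw [Matrix.permanent]
  rw [Finset.sum_eq_single_of_mem (1 : Equiv.Perm (Fin n)) (Finset.mem_univ _)]
  · simp
  · intro σ _ hσ
    have : ¬ ∀ i, σ i ≤ i := fun h => hσ (my_perm_eq_one σ h)
    push_neg at this
    obtain ⟨i, hi⟩ := this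
    exact Finset.prod_eq_zero (Finset.mem_univ i)
      (by simp only [Matrix.of_apply]; exact if_neg (not_le.mpr hi))

lemma my_lt_card {n : ℕ} :
    (Finset.univ.filter fun p : Fin n × Fin n => p.1 < p.2).card = (n ^ 2 - n) / 2 := by
  have hgt : (Finset.univ.filter fun p : Fin n × Fin n => p.2 < p.1).card
      = (Finset.univ.filter fun p : Fin n × Fin n => p.1 < p.2).card := by
    apply Finset.card_bij (fun p _ => p.swap)
    · intro p hp; simp at hp ⊢; exact hp
    · intro p hp q hq h; exact Prod.swap_injective h
    · intro p hp; exact ⟨p.swap, by simpa using hp, by simp⟩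
  have hunion : (Finset.univ.filter fun p : Fin n × Fin n => p.1 < p.2)
      ∪ (Finset.univ.filter fun p : Fin n × Fin n => p.2 < p.1)
      = Finset.univ.filter fun p : Fin n × Fin n => p.1 ≠ p.2 := by
    rw [← Finset.filter_or]
    apply Finset.filter_congr
    intro p _
    constructor
    · rintro (h | h) <;> [exact h.ne; exact h.ne']
    · exact fun h => Ne.lt_or_gt h
  have hdisj : Disjoint (Finset.univ.filter fun p : Fin n × Fin n => p.1 < p.2)
      (Finset.univ.filter fun p : Fin n × Fin n => p.2 < p.1) := by
    rw [Finset.disjoint_filter]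
    intro p _ h1 h2
    exact absurd h2 (asymm h1)
  have hne : (Finset.univ.filter fun p : Fin n × Fin n => p.1 ≠ p.2).card = n * n - n := by
    have : (Finset.univ.filter fun p : Fin n × Fin n => p.1 ≠ p.2)
        = (Finset.univ : Finset (Fin n)).offDiag := by
      ext p; simp [Finset.mem_offDiag]
    rw [this, Finset.offDiag_card]
    simp
  have := Finset.card_union_of_disjoint hdisj
  rw [hunion, hne, hgt] at this
  have hsq : n ^ 2 = n * n := sq n
  omega

lemma my_asym {n : ℕ} (M : Matrix (Fin n) (Fin n) ℝ)
    (h01 : ∀ i j, M i j = 0 ∨ M i j = 1) (hdiag : ∀ i, M i i = 1)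
    (hperm : M.permanent = 1) {i j : Fin n} (hij : i ≠ j)
    (h1 : M i j = 1) (h2 : M j i = 1) : False := by
  have hnonneg : ∀ σ : Equiv.Perm (Fin n), 0 ≤ ∏ k, M (σ k) k := fun σ =>
    Finset.prod_nonneg fun k _ => by rcases h01 (σ k) k with h | h <;> rw [h] <;> norm_num
  have hid : ∏ k, M ((1 : Equiv.Perm (Fin n)) k) k = 1 := by simp [hdiag]
  have hswap : ∏ k, M ((Equiv.swap i j) k) k = 1 := by
    apply Finset.prod_eq_one
    intro k _
    rcases eq_or_ne k i with rfl | hki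
    · rw [Equiv.swap_apply_left]; exact h2
    rcases eq_or_ne k j with rfl | hkj
    · rw [Equiv.swap_apply_right]; exact h1
    · rw [Equiv.swap_apply_of_ne_of_ne hki hkj]; exact hdiag k
  have hne : (1 : Equiv.Perm (Fin n)) ≠ Equiv.swap i j := by
    intro h
    have := congrArg (fun σ : Equiv.Perm (Fin n) => σ i) h
    simp only [Equiv.Perm.one_apply, Equiv.swap_apply_left] at this
    exact hij this
  have hle : ∑ σ ∈ ({1, Equiv.swap i j} : Finset (Equiv.Perm (Fin n))), ∏ k, M (σ k) k
      ≤ ∑ σ : Equiv.Perm (Fin n), ∏ k, M (σ k) k :=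
    Finset.sum_le_sum_of_subset_of_nonneg (Finset.subset_univ _) (fun σ _ _ => hnonneg σ)
  rw [Finset.sum_pair hne, hid, hswap] at hle
  rw [Matrix.permanent] at hperm
  rw [hperm] at hle
  linarith

/-- Every binary `n × n` matrix with all diagonal entries equal to `1`
and permanent `1` has at most `(n² - n)/2` off-diagonal entries equal to `1`; and this
bound is attained by the matrix with `1`'s on and above the diagonal and `0`'s below. -/
theorem typeC_binary_permanent_one_max_ones
    (n : ℕ) (hn : 1 ≤ n) :
    (∀ M : Matrix (Fin n) (Fin n) ℝ, (∀ i j, M i j = 0 ∨ M i j = 1) →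
      (∀ i, M i i = 1) → M.permanent = 1 →
      (Finset.univ.filter fun p : Fin n × Fin n => p.1 ≠ p.2 ∧ M p.1 p.2 = 1).card
        ≤ (n ^ 2 - n) / 2)
    ∧ (Matrix.of fun i j : Fin n => if i ≤ j then (1 : ℝ) else 0).permanent = 1
    ∧ (Finset.univ.filter fun p : Fin n × Fin n =>
        p.1 ≠ p.2 ∧ (Matrix.of fun i j : Fin n => if i ≤ j then (1 : ℝ) else 0) p.1 p.2 = 1).card
        = (n ^ 2 - n) / 2 := by
  refine ⟨?_, my_tri_perm, ?_⟩
  · intro M h01 hdiag hperm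
    rw [← my_lt_card (n := n)]
    apply Finset.card_le_card_of_injOn (fun p => if p.1 ≤ p.2 then p else p.swap)
    · intro p hp
      simp only [Finset.mem_coe, Finset.mem_filter, Finset.mem_univ, true_and] at hp ⊢
      split_ifs with h
      · exact lt_of_le_of_ne h hp.1
      · exact (not_le.mp h : p.2 < p.1)
    · intro p hp q hq heq
      simp only [Finset.coe_filter, Set.mem_setOf_eq, Finset.mem_univ, true_and] at hp hq
      dsimp only at heq
      split_ifs at heq with h1 h2 h2
      · exact heq
      · exfalso
        subst heq
        exact my_asym M h01 hdiag hperm hq.1 hq.2 (by simpa using hp.2)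
      · exfalso
        obtain rfl : q = p.swap := by
          exact heq.symm
        exact my_asym M h01 hdiag hperm hp.1 hp.2 (by simpa using hq.2)
      · exact Prod.swap_injective heq
  · rw [← my_lt_card (n := n)]
    congr 1
    apply Finset.filter_congr
    intro p _
    simp only [Matrix.of_apply]
    constructor
    · rintro ⟨hne, h1⟩
      by_contra hlt
      rw [if_neg (fun hle => hlt (lt_of_le_of_ne hle hne))] at h1
      norm_num at h1
    · intro h
      exact ⟨h.ne, by rw [if_pos h.le]⟩
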